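/- Let S be an even lattice of rank 3 whose real quadratic form has signature (2,1) (two positive and one negative square) and whose discriminant group S∨/S is isomorphic to (ℤ/2ℤ)³. Then S(1/2) is an odd unimodular lattice of signature (2,1), and S is isometric to the lattice with Gram matrix diag(2,2,−2); equivalently, S(1/2) is isometric to ⟨1⟩⊕⟨1⟩⊕⟨−1⟩. -/

import Mathlib

open Matrix

/-- An integral lattice: a free `ℤ`-module `Fin rank → ℤ` equipped with a symmetric
integer Gram matrix. -/
structure IntLattice where
  rank : ℕ
  gram : Matrix (Fin rank) (Fin rank) ℤ
  symm : gram.IsSymm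

namespace IntLattice

/-- The bilinear form of the lattice. -/
def bilin (L : IntLattice) (x y : Fin L.rank → ℤ) : ℤ := x ⬝ᵥ (L.gram *ᵥ y)

lemma gram_symm_apply (L : IntLattice) (i j : Fin L.rank) : L.gram j i = L.gram i j :=
  congrFun (congrFun L.symm i) j

lemma bilin_comm (L : IntLattice) (x y : Fin L.rank → ℤ) :
    L.bilin x y = L.bilin y x := by
  simp only [bilin, dotProduct, mulVec, Finset.mul_sum]
  rw [Finset.sum_comm]
  exact Finset.sum_congr rfl fun j _ => Finset.sum_congr rfl fun i _ => by
    rw [L.gram_symm_apply i j]; ring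

/-- The lattice is even: all norms are even. -/
def IsEven (L : IntLattice) : Prop := ∀ x, 2 ∣ L.bilin x x

/-- The lattice is unimodular: the Gram matrix has determinant `±1`, equivalently the
map `L → Hom(L,ℤ)` is bijective. -/
def IsUnimodular (L : IntLattice) : Prop := IsUnit L.gram.det

/-- Positive definite lattice. -/
def PosDef (L : IntLattice) : Prop := ∀ x, x ≠ 0 → 0 < L.bilin x x

/-- The real quadratic form of the lattice has `p` positive and `q` negative squares. -/
def HasSignature (L : IntLattice) (p q : ℕ) : Prop :=
  L.rank = p + q ∧
  ∃ Q : Matrix (Fin L.rank) (Fin L.rank) ℝ, IsUnit Q.det ∧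
    Qᵀ * (L.gram.map ((↑) : ℤ → ℝ)) * Q =
      Matrix.diagonal (fun i : Fin L.rank => if (i : ℕ) < p then (1 : ℝ) else -1)

/-- The rational extension of the bilinear form. -/
def qbilin (L : IntLattice) (x y : Fin L.rank → ℚ) : ℚ :=
  x ⬝ᵥ ((L.gram.map ((↑) : ℤ → ℚ)) *ᵥ y)

end IntLattice

def castVec {N : ℕ} (x : Fin N → ℤ) : Fin N → ℚ := fun i => (x i : ℚ)

def castHom (N : ℕ) : (Fin N → ℤ) →+ (Fin N → ℚ) where
  toFun := castVec
  map_zero' := by funext i; simp [castVec]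
  map_add' a b := by funext i; simp [castVec]

namespace IntLattice

/-- The dual lattice `L∨ = {x ∈ L⊗ℚ : ⟨x,L⟩ ⊆ ℤ}`, as an additive subgroup of `ℚ^rank`. -/
def dualSub (L : IntLattice) : AddSubgroup (Fin L.rank → ℚ) where
  carrier := {x | ∀ y : Fin L.rank → ℤ, ∃ m : ℤ, L.qbilin x (castVec y) = m}
  add_mem' := by
    intro a b ha hb y
    obtain ⟨m, hm⟩ := ha y
    obtain ⟨m', hm'⟩ := hb y
    refine ⟨m + m', ?_⟩
    simp only [qbilin, add_dotProduct] at *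
    rw [hm, hm']; push_cast; ring
  zero_mem' := by
    intro y
    exact ⟨0, by simp [qbilin]⟩
  neg_mem' := by
    intro a ha y
    obtain ⟨m, hm⟩ := ha y
    refine ⟨-m, ?_⟩
    simp only [qbilin, neg_dotProduct] at *
    rw [hm]; push_cast; ring

/-- The image of `L` inside `L⊗ℚ`. -/
def latticeIn (L : IntLattice) : AddSubgroup (Fin L.rank → ℚ) := (castHom L.rank).range

/-- The discriminant group `A_L = L∨/L`. -/
abbrev discGroup (L : IntLattice) : Type :=
  ↥(L.dualSub) ⧸ (L.latticeIn).addSubgroupOf L.dualSub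

/-- Projection from the dual lattice to the discriminant group. -/
def dmk (L : IntLattice) : L.dualSub → L.discGroup := QuotientAddGroup.mk

/-- `g : A_M → A_N` carries the discriminant quadratic form `q_M` to `q_N`
(values in `ℚ/2ℤ`). -/
def QFormIso (M N : IntLattice) (g : M.discGroup ≃+ N.discGroup) : Prop :=
  ∀ x : M.dualSub, ∃ y : N.dualSub,
    N.dmk y = g (M.dmk x) ∧ ∃ m : ℤ, N.qbilin ↑y ↑y - M.qbilin ↑x ↑x = 2 * (m : ℚ)

/-- `g : A_M → A_N` carries the discriminant quadratic form `q_M` to `-q_N`. -/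
def QFormIsoNeg (M N : IntLattice) (g : M.discGroup ≃+ N.discGroup) : Prop :=
  ∀ x : M.dualSub, ∃ y : N.dualSub,
    N.dmk y = g (M.dmk x) ∧ ∃ m : ℤ, N.qbilin ↑y ↑y + M.qbilin ↑x ↑x = 2 * (m : ℚ)

/-- The integer matrix `F` defines an isometry `M → N` of lattices (`x ↦ F *ᵥ x`). -/
def MatIsometry (M N : IntLattice) (F : Matrix (Fin N.rank) (Fin M.rank) ℤ) : Prop :=
  (∃ F' : Matrix (Fin M.rank) (Fin N.rank) ℤ, F * F' = 1 ∧ F' * F = 1) ∧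
  Fᵀ * N.gram * F = M.gram

/-- The lattices `M` and `N` are isometric. -/
def Isometric (M N : IntLattice) : Prop := ∃ F, MatIsometry M N F

end IntLattice

/-- The rows of `B` form a `ℤ`-basis of the submodule `S`. -/
def IsBasisOf {N : ℕ} (S : Submodule ℤ (Fin N → ℤ)) {r : ℕ}
    (B : Matrix (Fin r) (Fin N) ℤ) : Prop :=
  (∀ i, B i ∈ S) ∧ ∀ x ∈ S, ∃! c : Fin r → ℤ, x = Matrix.vecMul c B

namespace IntLattice

/-- Gram matrix of the vectors given by the rows of `B`. -/
def gramOf (L : IntLattice) {r : ℕ} (B : Matrix (Fin r) (Fin L.rank) ℤ) :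
    Matrix (Fin r) (Fin r) ℤ := Matrix.of fun i j => L.bilin (B i) (B j)

lemma gramOf_isSymm (L : IntLattice) {r : ℕ} (B : Matrix (Fin r) (Fin L.rank) ℤ) :
    (L.gramOf B).IsSymm := by
  unfold Matrix.IsSymm
  ext i j
  simp only [transpose_apply, gramOf, Matrix.of_apply]
  exact L.bilin_comm _ _

/-- The sublattice of `L` spanned by the rows of `B`, as an abstract lattice. -/
def sub (L : IntLattice) {r : ℕ} (B : Matrix (Fin r) (Fin L.rank) ℤ) : IntLattice :=
  ⟨r, L.gramOf B, L.gramOf_isSymm B⟩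

/-- `M(1/2)`: the same module with the form divided by two. -/
abbrev halfL (M : IntLattice) : IntLattice :=
  ⟨M.rank, M.gram.map (fun z => z / 2), M.symm.map _⟩

end IntLattice

/-- Orthogonal direct sum of Gram matrices. -/
def dsumGram {m k : ℕ} (A : Matrix (Fin m) (Fin m) ℤ) (B : Matrix (Fin k) (Fin k) ℤ) :
    Matrix (Fin (m + k)) (Fin (m + k)) ℤ :=
  Matrix.of fun i j =>
    if hi : (i : ℕ) < m then
      if hj : (j : ℕ) < m then A ⟨i, hi⟩ ⟨j, hj⟩ else 0
    else
      if hj : (j : ℕ) < m then 0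
      else B ⟨(i : ℕ) - m, by omega⟩ ⟨(j : ℕ) - m, by omega⟩

lemma dsumGram_isSymm {m k : ℕ} {A : Matrix (Fin m) (Fin m) ℤ}
    {B : Matrix (Fin k) (Fin k) ℤ} (hA : A.IsSymm) (hB : B.IsSymm) :
    (dsumGram A B).IsSymm := by
  unfold Matrix.IsSymm
  ext i j
  simp only [transpose_apply, dsumGram, Matrix.of_apply]
  have hA' : ∀ a b, A b a = A a b := fun a b => congrFun (congrFun hA a) b
  have hB' : ∀ a b, B b a = B a b := fun a b => congrFun (congrFun hB a) b
  by_cases hi : (i : ℕ) < m <;> by_cases hj : (j : ℕ) < m <;> simp [hi, hj]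
  · exact hA' _ _
  · exact hB' _ _

/-- Orthogonal direct sum of lattices. -/
def IntLattice.dsum (M N : IntLattice) : IntLattice :=
  ⟨M.rank + N.rank, dsumGram M.gram N.gram, dsumGram_isSymm M.symm N.symm⟩

/-- The lattice with diagonal Gram matrix `diag d`. -/
def diagL {r : ℕ} (d : Fin r → ℤ) : IntLattice :=
  ⟨r, Matrix.diagonal d, Matrix.isSymm_diagonal d⟩

/-- The hyperbolic plane `U`. -/
def UL : IntLattice := ⟨2, Matrix.of !![0, 1; 1, 0], by decide⟩

/-- The negative definite even unimodular lattice `E₈` (negative of the `E₈` Cartan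
matrix; node `0` is the branch node with arms `1`, `2-3`, `4-5-6-7`). -/
def E8L : IntLattice :=
  ⟨8, !![-2,  1,  1,  0,  1,  0,  0,  0;
          1, -2,  0,  0,  0,  0,  0,  0;
          1,  0, -2,  1,  0,  0,  0,  0;
          0,  0,  1, -2,  0,  0,  0,  0;
          1,  0,  0,  0, -2,  1,  0,  0;
          0,  0,  0,  0,  1, -2,  1,  0;
          0,  0,  0,  0,  0,  1, -2,  1;
          0,  0,  0,  0,  0,  0,  1, -2], by decide⟩

/-- The rank-two lattice with Gram matrix `[[a,b],[b,d]]`. -/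
def sym2L (a b d : ℤ) : IntLattice :=
  ⟨2, !![a, b; b, d], by
    unfold Matrix.IsSymm
    ext i j
    fin_cases i <;> fin_cases j <;> simp⟩

/-- The `ε`-eigenspace of an involution `φ`. -/
def eigenSub {n : ℕ} (φ : (Fin n → ℤ) ≃ₗ[ℤ] (Fin n → ℤ)) (ε : ℤ) :
    Submodule ℤ (Fin n → ℤ) where
  carrier := {x | φ x = ε • x}
  add_mem' := by
    intro a b ha hb
    simp only [Set.mem_setOf_eq] at *
    rw [map_add, ha, hb, smul_add]
  zero_mem' := by simp
  smul_mem' := by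
    intro c x hx
    simp only [Set.mem_setOf_eq] at *
    rw [_root_.map_smul, hx, smul_comm]

/-- The orthogonal complement of a set of vectors in `L`. -/
def perpOfSet (L : IntLattice) (S : Set (Fin L.rank → ℤ)) :
    Submodule ℤ (Fin L.rank → ℤ) where
  carrier := {x | ∀ s ∈ S, L.bilin x s = 0}
  add_mem' := by
    intro a b ha hb s hs
    have ha' := ha s hs
    have hb' := hb s hs
    simp only [IntLattice.bilin] at ha' hb' ⊢
    rw [add_dotProduct, ha', hb', add_zero]
  zero_mem' := by
    intro s hs
    simp [IntLattice.bilin]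
  smul_mem' := by
    intro c x hx s hs
    have hx' := hx s hs
    simp only [IntLattice.bilin] at hx' ⊢
    rw [smul_dotProduct, hx', smul_zero]

/-- `P` is a primitive lattice vector. -/
def Primitive {n : ℕ} (P : Fin n → ℤ) : Prop :=
  P ≠ 0 ∧ ∀ (m : ℤ) (y : Fin n → ℤ), P = m • y → IsUnit m

/-- An integral polarized K3 involution `(L, φ, P′)`: `L` is an even unimodular lattice
of signature `(3,19)`, `φ` a form-preserving involution with hyperbolic fixed lattice,
and `P′` a polarization with `φ(P′) = -P′` and `(P′)² > 0`. -/
structure K3Inv where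
  L : IntLattice
  even : L.IsEven
  unimod : L.IsUnimodular
  sig : L.HasSignature 3 19
  φ : (Fin L.rank → ℤ) ≃ₗ[ℤ] (Fin L.rank → ℤ)
  φ_isom : ∀ x y, L.bilin (φ x) (φ y) = L.bilin x y
  φ_invol : ∀ x, φ (φ x) = x
  P' : Fin L.rank → ℤ
  φP' : φ P' = -P'
  P'pos : 0 < L.bilin P' P'
  fixed_hyp : ∃ (r : ℕ) (B : Matrix (Fin r) (Fin L.rank) ℤ),
    IsBasisOf (eigenSub φ 1) B ∧ (L.sub B).HasSignature 1 (r - 1)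

/-- Isomorphism of integral polarized K3 involutions. -/
def K3Iso (K K' : K3Inv) : Prop :=
  ∃ f : (Fin K.L.rank → ℤ) ≃ₗ[ℤ] (Fin K'.L.rank → ℤ),
    (∀ x y, K'.L.bilin (f x) (f y) = K.L.bilin x y) ∧
    f K.P' = K'.P' ∧
    ∀ x, K'.φ (f x) = f (K.φ x)

/-- `(L,φ,P′)` has genus invariants `(r, a, δ_φ; k, n, δ_P, δ_{φP})`. -/
def HasGenusInvariants (K : K3Inv) (r a δφ k : ℕ) (n : ℤ) (δP δφP : ℕ) : Prop :=
  (δφ = 0 ∨ δφ = 1) ∧ (δP = 0 ∨ δP = 1) ∧ (δφP = 0 ∨ δφP = 1) ∧ 1 ≤ k ∧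
  (∃ B : Matrix (Fin r) (Fin K.L.rank) ℤ,
      IsBasisOf (eigenSub K.φ 1) B ∧
      Nonempty ((K.L.sub B).discGroup ≃+ (Fin a → ZMod 2))) ∧
  (δφ = 0 ↔ ∀ x, 2 ∣ K.L.bilin x (K.φ x)) ∧
  ∃ P : Fin K.L.rank → ℤ, Primitive P ∧ K.P' = (k : ℤ) • P ∧ n = K.L.bilin P P ∧
    (δP = 0 ↔ ∀ y ∈ eigenSub K.φ (-1), 2 ∣ K.L.bilin P y) ∧
    (δφP = 0 ↔ ∀ x, 2 ∣ (K.L.bilin x (K.φ x) - K.L.bilin x P))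

/-- Two even lattices belong to the same genus: equal signatures over `ℝ` and
isomorphic discriminant quadratic forms. -/
def SameGenus (M N : IntLattice) : Prop :=
  (∃ p q, M.HasSignature p q ∧ N.HasSignature p q) ∧
  ∃ g : M.discGroup ≃+ N.discGroup, IntLattice.QFormIso M N g

/-- The `p`-primary part of an abelian group. -/
def primaryPart (p : ℕ) (G : Type*) [AddCommGroup G] : AddSubgroup G where
  carrier := {x | ∃ j : ℕ, p ^ j • x = 0}
  add_mem' := by
    rintro a b ⟨j, hj⟩ ⟨l, hl⟩
    refine ⟨j + l, ?_⟩
    rw [smul_add]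
    have h1 : p ^ (j + l) • a = 0 := by rw [pow_add, mul_comm, mul_smul, hj, smul_zero]
    have h2 : p ^ (j + l) • b = 0 := by rw [pow_add, mul_smul, hl, smul_zero]
    rw [h1, h2, add_zero]
  zero_mem' := ⟨0, smul_zero _⟩
  neg_mem' := by
    rintro a ⟨j, hj⟩
    exact ⟨j, by rw [smul_neg, hj, neg_zero]⟩

/-- A pair `(M, τ)`: an even lattice `M` in the genus of the reference lattice `R`
together with an isomorphism `τ : q_M → q_R` of discriminant quadratic forms. -/
structure QPairR (R : IntLattice) where
  M : IntLattice
  even : M.IsEven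
  genus : SameGenus M R
  τ : M.discGroup ≃+ R.discGroup
  hτ : IntLattice.QFormIso M R τ

/-- Equivalence of pairs: `(M,τ) ∼ (M̃,τ̃)` iff there is an isometry `f : M → M̃`
with `τ = τ̃ ∘ f̄`, where `f̄` is the induced map on discriminant groups. -/
def QPairREquiv {R : IntLattice} (p p' : QPairR R) : Prop :=
  ∃ F : Matrix (Fin p'.M.rank) (Fin p.M.rank) ℤ,
    IntLattice.MatIsometry p.M p'.M F ∧
    ∀ (x : p.M.dualSub) (y : p'.M.dualSub),
      (y : Fin p'.M.rank → ℚ) = (F.map ((↑) : ℤ → ℚ)) *ᵥ (x : Fin p.M.rank → ℚ) →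
      p.τ (p.M.dmk x) = p'.τ (p'.M.dmk y)

/-- `τ` is an isomorphism from the discriminant bilinear form of `M(1/2)` to the
standard form `b_{⟨-n/2⟩}` on `ℤ/(n/2)`, which sends `(x̄,ȳ)` to `-2xy/n mod ℤ`. -/
def BIsoStd (M : IntLattice) (n : ℤ) (τ : (M.halfL).discGroup ≃+ ZMod (n / 2).toNat) :
    Prop :=
  ∀ (x y : (M.halfL).dualSub) (α β : ℤ),
    ((α : ZMod (n / 2).toNat) = τ ((M.halfL).dmk x)) →
    ((β : ZMod (n / 2).toNat) = τ ((M.halfL).dmk y)) →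
    ∃ m : ℤ, (M.halfL).qbilin ↑x ↑y + (2 * α * β : ℚ) / (n : ℚ) = (m : ℚ)

/-- A pair `(M, τ)`: an even lattice `M` in the genus of the reference lattice `R`
together with an isomorphism `τ : b_{M(1/2)} → b_{⟨-n/2⟩}` of discriminant bilinear
forms. -/
structure BPairR (R : IntLattice) (n : ℤ) where
  M : IntLattice
  even : M.IsEven
  genus : SameGenus M R
  τ : (M.halfL).discGroup ≃+ ZMod (n / 2).toNat
  hτ : BIsoStd M n τ

/-- Equivalence of pairs `(M,τ) ∼ (M̃,τ̃)`: there is an isometry `f : M → M̃` with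
`τ = τ̃ ∘ f̄`. -/
def BPairREquiv {R : IntLattice} {n : ℤ} (p p' : BPairR R n) : Prop :=
  ∃ F : Matrix (Fin p'.M.rank) (Fin p.M.rank) ℤ,
    IntLattice.MatIsometry p.M p'.M F ∧
    ∀ (x : (p.M.halfL).dualSub) (y : (p'.M.halfL).dualSub),
      (y : Fin p'.M.rank → ℚ) = (F.map ((↑) : ℤ → ℚ)) *ᵥ (x : Fin p.M.rank → ℚ) →
      p.τ ((p.M.halfL).dmk x) = p'.τ ((p'.M.halfL).dmk y)

/-- `g` is an isomorphism `b_{⟨n/2⟩} → -b_{⟨n/2⟩}` of finite bilinear forms on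
`ℤ/(n/2)`, where `b_{⟨n/2⟩}(x̄,ȳ) = 2xy/n mod ℤ`. -/
def NegBIso (n : ℤ) (g : ZMod (n / 2).toNat ≃+ ZMod (n / 2).toNat) : Prop :=
  ∀ x y x' y' : ℤ,
    ((x' : ZMod (n / 2).toNat) = g ((x : ℤ) : ZMod (n / 2).toNat)) →
    ((y' : ZMod (n / 2).toNat) = g ((y : ℤ) : ZMod (n / 2).toNat)) →
    n ∣ 2 * (x' * y' + x * y)

/-- `g` preserves the restriction to the 2-primary part of the discriminant quadratic
form `q(x̄,ȳ) = x²/2 - y²/n mod 2ℤ` of `⟨2⟩⊕⟨-n⟩` on `ℤ/2 × ℤ/n`. -/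
def QPres2 (n : ℤ)
    (g : primaryPart 2 (ZMod 2 × ZMod n.toNat) ≃+ primaryPart 2 (ZMod 2 × ZMod n.toNat)) :
    Prop :=
  ∀ (x : primaryPart 2 (ZMod 2 × ZMod n.toNat)) (α β α' β' : ℤ),
    ((α : ZMod 2) = (x : ZMod 2 × ZMod n.toNat).1) →
    ((β : ZMod n.toNat) = (x : ZMod 2 × ZMod n.toNat).2) →
    ((α' : ZMod 2) = ((g x : primaryPart 2 (ZMod 2 × ZMod n.toNat)) : ZMod 2 × ZMod n.toNat).1) →
    ((β' : ZMod n.toNat) = ((g x : primaryPart 2 (ZMod 2 × ZMod n.toNat)) : ZMod 2 × ZMod n.toNat).2) →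
    (4 * n) ∣ (n * (α' ^ 2 - α ^ 2) - 2 * (β' ^ 2 - β ^ 2))

/-- `g` preserves the restriction to the 2-primary part of the discriminant bilinear
form `b(x̄,ȳ) = -2xy/n mod ℤ` of `⟨-n/2⟩` on `ℤ/(n/2)`. -/
def BPres2 (n : ℤ)
    (g : primaryPart 2 (ZMod (n / 2).toNat) ≃+ primaryPart 2 (ZMod (n / 2).toNat)) :
    Prop :=
  ∀ (x y : primaryPart 2 (ZMod (n / 2).toNat)) (α β α' β' : ℤ),
    ((α : ZMod (n / 2).toNat) = (x : ZMod (n / 2).toNat)) →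
    ((β : ZMod (n / 2).toNat) = (y : ZMod (n / 2).toNat)) →
    ((α' : ZMod (n / 2).toNat) = ((g x : primaryPart 2 (ZMod (n / 2).toNat)) : ZMod (n / 2).toNat)) →
    ((β' : ZMod (n / 2).toNat) = ((g y : primaryPart 2 (ZMod (n / 2).toNat)) : ZMod (n / 2).toNat)) →
    n ∣ 2 * (α' * β' - α * β)


section AuxiliaryLemmas

section AuxHelpers

variable {R : Type*} [CommRing R]

lemma congr_entry {n m : ℕ} (T : Matrix (Fin n) (Fin m) R) (K : Matrix (Fin n) (Fin n) R)
    (i j : Fin m) :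
    (Tᵀ * K * T) i j = (fun a => T a i) ⬝ᵥ K *ᵥ (fun a => T a j) := by
  simp only [mul_apply, dotProduct, mulVec, transpose_apply, Finset.sum_mul, Finset.mul_sum]
  rw [Finset.sum_comm]
  exact Finset.sum_congr rfl fun a _ => Finset.sum_congr rfl fun b _ => by ring

lemma vec_congr_form {n m : ℕ} (T : Matrix (Fin n) (Fin m) R) (K : Matrix (Fin n) (Fin n) R)
    (x y : Fin m → R) :
    x ⬝ᵥ (Tᵀ * K * T) *ᵥ y = (T *ᵥ x) ⬝ᵥ K *ᵥ (T *ᵥ y) := by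
  calc x ⬝ᵥ (Tᵀ * K * T) *ᵥ y = x ᵥ* (Tᵀ * K * T) ⬝ᵥ y := dotProduct_mulVec _ _ _
    _ = ((x ᵥ* Tᵀ) ᵥ* K) ᵥ* T ⬝ᵥ y := by rw [← vecMul_vecMul, ← vecMul_vecMul]
    _ = (x ᵥ* Tᵀ) ᵥ* K ⬝ᵥ (T *ᵥ y) := (dotProduct_mulVec _ _ _).symm
    _ = (x ᵥ* Tᵀ) ⬝ᵥ K *ᵥ (T *ᵥ y) := (dotProduct_mulVec _ _ _).symm
    _ = (T *ᵥ x) ⬝ᵥ K *ᵥ (T *ᵥ y) := by rw [← mulVec_transpose, transpose_transpose]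

lemma isSymm_congr {n m : ℕ} {K : Matrix (Fin n) (Fin n) R} (h : K.IsSymm)
    (T : Matrix (Fin n) (Fin m) R) : (Tᵀ * K * T).IsSymm := by
  show _ = _
  rw [transpose_mul, transpose_mul, transpose_transpose, h.eq, Matrix.mul_assoc]

lemma mulVec_eq_zero_iff {n : ℕ} (M : Matrix (Fin n) (Fin n) ℤ) (h : M.det ≠ 0)
    {x : Fin n → ℤ} (hx : M *ᵥ x = 0) : x = 0 := by
  have h2 : M.adjugate *ᵥ (M *ᵥ x) = M.adjugate *ᵥ 0 := congrArg _ hx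
  rw [mulVec_mulVec, adjugate_mul, mulVec_zero, smul_mulVec, one_mulVec] at h2
  rcases smul_eq_zero.mp h2 with h3 | h3
  · exact absurd h3 h
  · exact h3

lemma posdef_congr {n m : ℕ} {K : Matrix (Fin n) (Fin n) ℤ}
    (hpos : ∀ x : Fin n → ℤ, x ≠ 0 → 0 < x ⬝ᵥ K *ᵥ x)
    (T : Matrix (Fin n) (Fin m) ℤ) (hT : ∀ x : Fin m → ℤ, T *ᵥ x = 0 → x = 0) :
    ∀ x : Fin m → ℤ, x ≠ 0 → 0 < x ⬝ᵥ (Tᵀ * K * T) *ᵥ x := by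
  intro x hx
  rw [vec_congr_form]
  exact hpos _ (fun h => hx (hT x h))

end AuxHelpers

section Binary

private lemma binary_red_aux : ∀ N : ℕ, ∀ C : Matrix (Fin 2) (Fin 2) ℤ, C.IsSymm →
    (∀ x : Fin 2 → ℤ, x ≠ 0 → 0 < x ⬝ᵥ C *ᵥ x) → (C 0 0).natAbs ≤ N →
    ∃ R : Matrix (Fin 2) (Fin 2) ℤ, IsUnit R.det ∧
      (Rᵀ * C * R) 0 0 ≤ (Rᵀ * C * R) 1 1 ∧ 2 * |(Rᵀ * C * R) 0 1| ≤ (Rᵀ * C * R) 0 0 := by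
  intro N
  induction N with
  | zero =>
    intro C hs hpos hle
    exfalso
    have h1 : (0 : Fin 2 → ℤ) ≠ ![1, 0] := by
      intro h; simpa using congrFun h 0
    have := hpos ![1,0] (Ne.symm h1)
    have hval : ![(1:ℤ),0] ⬝ᵥ C *ᵥ ![1,0] = C 0 0 := by
      simp [dotProduct, mulVec, Fin.sum_univ_two]
    omega
  | succ N ih =>
    intro C hs hpos hle
    have h1 : (0 : Fin 2 → ℤ) ≠ ![1, 0] := by intro h; simpa using congrFun h 0
    have ha : 0 < C 0 0 := by
      have := hpos ![1,0] (Ne.symm h1)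
      have hval : ![(1:ℤ),0] ⬝ᵥ C *ᵥ ![1,0] = C 0 0 := by
        simp [dotProduct, mulVec, Fin.sum_univ_two]
      omega
    set a := C 0 0 with haa
    set b := C 0 1 with hbb
    have hsym10 : C 1 0 = b := hs.apply 0 1
    have h2a : (0:ℤ) < 2*a := by linarith
    have hr1 : 0 ≤ (2*b+a) % (2*a) := Int.emod_nonneg _ (by omega)
    have hr2 : (2*b+a) % (2*a) < 2*a := Int.emod_lt_of_pos _ h2a
    set k := (2*b+a) / (2*a) with hkk
    have hk : 2*(b - k*a) = (2*b+a) % (2*a) - a := by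
      have h := Int.mul_ediv_add_emod (2*b+a) (2*a)
      rw [← hkk] at h
      linarith
    set b' := b - k*a with hbb'
    have hb' : 2*|b'| ≤ a := by
      rcases abs_cases b' with ⟨h,_⟩|⟨h,_⟩ <;> rw [h] <;> linarith
    set S : Matrix (Fin 2) (Fin 2) ℤ := !![1, -k; 0, 1] with hS
    have hSdet : S.det = 1 := by simp [hS, det_fin_two]
    set C' := Sᵀ * C * S with hC'
    have hC'00 : C' 0 0 = a := by
      rw [hC', congr_entry]
      simp [hS, dotProduct, mulVec, Fin.sum_univ_two, haa]
    have hC'01 : C' 0 1 = b' := by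
      rw [hC', congr_entry]
      simp [hS, dotProduct, mulVec, Fin.sum_univ_two, hsym10]
      ring
    have hC's : C'.IsSymm := isSymm_congr hs S
    have hSvec : ∀ x : Fin 2 → ℤ, S *ᵥ x = 0 → x = 0 :=
      fun x hx => mulVec_eq_zero_iff S (by rw [hSdet]; norm_num) hx
    have hpos' := posdef_congr hpos S hSvec
    have h10 : (0 : Fin 2 → ℤ) ≠ ![0, 1] := by intro h; simpa using congrFun h 1
    have hc' : 0 < C' 1 1 := by
      have := hpos' ![0,1] (Ne.symm h10)
      rw [← hC'] at this
      have hval : ![(0:ℤ),1] ⬝ᵥ C' *ᵥ ![0,1] = C' 1 1 := by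
        simp [dotProduct, mulVec, Fin.sum_univ_two]
      omega
    by_cases hac : a ≤ C' 1 1
    · exact ⟨S, by rw [hSdet]; exact isUnit_one, by rw [← hC'] at *; rw [hC'00]; exact hac,
        by rw [← hC'] at *; rw [hC'00, hC'01]; exact hb'⟩
    · set W : Matrix (Fin 2) (Fin 2) ℤ := !![0,1;1,0] with hW
      have hWdet : W.det = -1 := by simp [hW, det_fin_two]
      set C'' := Wᵀ * C' * W with hC''
      have hC''00 : C'' 0 0 = C' 1 1 := by
        rw [hC'', congr_entry]
        simp [hW, dotProduct, mulVec, Fin.sum_univ_two]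
      have hWvec : ∀ x : Fin 2 → ℤ, W *ᵥ x = 0 → x = 0 :=
        fun x hx => mulVec_eq_zero_iff W (by rw [hWdet]; norm_num) hx
      have hle'' : (C'' 0 0).natAbs ≤ N := by
        rw [hC''00]; omega
      obtain ⟨R₂, hR₂u, hr1', hr2'⟩ := ih C'' (isSymm_congr hC's W) (posdef_congr hpos' W hWvec) hle''
      refine ⟨S * W * R₂, ?_, ?_, ?_⟩
      · rw [det_mul, det_mul, hSdet, hWdet]
        exact (IsUnit.neg isUnit_one).mul hR₂u
      · have : (S * W * R₂)ᵀ * C * (S * W * R₂) = R₂ᵀ * C'' * R₂ := by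
          rw [hC'', hC']
          rw [transpose_mul, transpose_mul]
          noncomm_ring
        rw [this]; exact hr1'
      · have : (S * W * R₂)ᵀ * C * (S * W * R₂) = R₂ᵀ * C'' * R₂ := by
          rw [hC'', hC']
          rw [transpose_mul, transpose_mul]
          noncomm_ring
        rw [this]; exact hr2'

lemma binary_reduction (C : Matrix (Fin 2) (Fin 2) ℤ) (hs : C.IsSymm)
    (hpos : ∀ x : Fin 2 → ℤ, x ≠ 0 → 0 < x ⬝ᵥ C *ᵥ x) :
    ∃ R : Matrix (Fin 2) (Fin 2) ℤ, IsUnit R.det ∧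
      (Rᵀ * C * R) 0 0 ≤ (Rᵀ * C * R) 1 1 ∧ 2 * |(Rᵀ * C * R) 0 1| ≤ (Rᵀ * C * R) 0 0 :=
  binary_red_aux (C 0 0).natAbs C hs hpos le_rfl

end Binary

section Corollaries

lemma det_congr_sq {n : ℕ} (R C : Matrix (Fin n) (Fin n) ℤ) (hR : IsUnit R.det) :
    (Rᵀ * C * R).det = C.det := by
  rw [det_mul, det_mul, det_transpose]
  rcases Int.isUnit_iff.mp hR with h | h <;> rw [h] <;> ring

lemma binary_min (C : Matrix (Fin 2) (Fin 2) ℤ) (hs : C.IsSymm)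
    (hpos : ∀ x : Fin 2 → ℤ, x ≠ 0 → 0 < x ⬝ᵥ C *ᵥ x) :
    ∃ u : Fin 2 → ℤ, u ≠ 0 ∧ 0 < u ⬝ᵥ C *ᵥ u ∧ 3 * (u ⬝ᵥ C *ᵥ u)^2 ≤ 4 * C.det := by
  obtain ⟨R, hRu, h1, h2⟩ := binary_reduction C hs hpos
  set D := Rᵀ * C * R with hD
  have hDdet : D.det = C.det := det_congr_sq R C hRu
  have hDs : D.IsSymm := isSymm_congr hs R
  have hD10 : D 1 0 = D 0 1 := hDs.apply 0 1
  have hcol : (fun i => R i 0) ≠ 0 := by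
    intro h
    have h0 := congrFun h 0
    have h1' := congrFun h 1
    simp only [Pi.zero_apply] at h0 h1'
    have : R.det = 0 := by rw [det_fin_two, h0, h1']; ring
    rw [this] at hRu
    simp at hRu
  have hval : (fun i => R i 0) ⬝ᵥ C *ᵥ (fun i => R i 0) = D 0 0 := (congr_entry R C 0 0).symm
  have hRvec : ∀ x : Fin 2 → ℤ, R *ᵥ x = 0 → x = 0 := fun x hx =>
    mulVec_eq_zero_iff R (fun h0 => by rw [h0] at hRu; simp at hRu) hx
  have hDpos := posdef_congr hpos R hRvec
  have h10 : (0 : Fin 2 → ℤ) ≠ ![1, 0] := by intro h; simpa using congrFun h 0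
  have ha : 0 < D 0 0 := by
    have := hDpos ![1,0] (Ne.symm h10)
    rw [← hD] at this
    have hval2 : ![(1:ℤ),0] ⬝ᵥ D *ᵥ ![1,0] = D 0 0 := by
      simp [dotProduct, mulVec, Fin.sum_univ_two]
    omega
  refine ⟨fun i => R i 0, hcol, by rw [hval]; exact ha, ?_⟩
  rw [hval, ← hDdet, det_fin_two, hD10]
  have h4 : 4 * D 0 1 ^ 2 ≤ D 0 0 ^ 2 := by nlinarith [abs_nonneg (D 0 1), sq_abs (D 0 1)]
  nlinarith [h1, ha, h4]

lemma binary_unimodular (C : Matrix (Fin 2) (Fin 2) ℤ) (hs : C.IsSymm)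
    (hpos : ∀ x : Fin 2 → ℤ, x ≠ 0 → 0 < x ⬝ᵥ C *ᵥ x) (hdet : C.det = 1) :
    ∃ R : Matrix (Fin 2) (Fin 2) ℤ, IsUnit R.det ∧ Rᵀ * C * R = 1 := by
  obtain ⟨R, hRu, h1, h2⟩ := binary_reduction C hs hpos
  set D := Rᵀ * C * R with hD
  have hDdet : D.det = 1 := by rw [hD, det_congr_sq R C hRu, hdet]
  have hDs : D.IsSymm := isSymm_congr hs R
  have hD10 : D 1 0 = D 0 1 := hDs.apply 0 1
  have hRvec : ∀ x : Fin 2 → ℤ, R *ᵥ x = 0 → x = 0 := fun x hx =>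
    mulVec_eq_zero_iff R (fun h0 => by rw [h0] at hRu; simp at hRu) hx
  have hDpos := posdef_congr hpos R hRvec
  have h10 : (0 : Fin 2 → ℤ) ≠ ![1, 0] := by intro h; simpa using congrFun h 0
  have ha : 0 < D 0 0 := by
    have := hDpos ![1,0] (Ne.symm h10)
    rw [← hD] at this
    have hval2 : ![(1:ℤ),0] ⬝ᵥ D *ᵥ ![1,0] = D 0 0 := by
      simp [dotProduct, mulVec, Fin.sum_univ_two]
    omega
  have hdet2 : D 0 0 * D 1 1 - D 0 1 * D 0 1 = 1 := by
    rw [det_fin_two, hD10] at hDdet; linarith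
  have h4 : 4 * D 0 1 ^ 2 ≤ D 0 0 ^ 2 := by nlinarith [abs_nonneg (D 0 1), sq_abs (D 0 1)]
  have ha1 : D 0 0 = 1 := by nlinarith [h1, ha, h4, hdet2]
  have hb0 : D 0 1 = 0 := by
    rw [ha1] at h2
    have := abs_nonneg (D 0 1)
    have : |D 0 1| = 0 := by omega
    exact abs_eq_zero.mp this
  have hc1 : D 1 1 = 1 := by rw [ha1, hb0] at hdet2; linarith
  refine ⟨R, hRu, ?_⟩
  rw [← hD]
  ext i j
  fin_cases i <;> fin_cases j <;>
    simp [ha1, hb0, hc1, hD10, Matrix.one_apply]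

end Corollaries

section Completion

lemma complete_primitive (c : Fin 3 → ℤ) (h : Int.gcd (Int.gcd (c 0) (c 1)) (c 2) = 1) :
    ∃ A A' : Matrix (Fin 3) (Fin 3) ℤ, A * A' = 1 ∧ A' * A = 1 ∧ ∀ j, A 0 j = c j := by
  by_cases hc01 : c 0 = 0 ∧ c 1 = 0
  · obtain ⟨hc0, hc1⟩ := hc01
    rw [hc0, hc1] at h
    simp [Int.gcd] at h
    have hsq : c 2 * c 2 = 1 := by
      rcases Int.natAbs_eq (c 2) with he | he <;> rw [he, h] <;> ring
    refine ⟨!![0,0,c 2; 1,0,0; 0,1,0], !![0,1,0; 0,0,1; c 2,0,0], ?_, ?_, ?_⟩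
    · ext i j
      fin_cases i <;> fin_cases j <;>
        simp [Matrix.mul_apply, Fin.sum_univ_three, Matrix.one_apply, Matrix.vecHead,
          Matrix.vecTail, hsq]
    · ext i j
      fin_cases i <;> fin_cases j <;>
        simp [Matrix.mul_apply, Fin.sum_univ_three, Matrix.one_apply, Matrix.vecHead,
          Matrix.vecTail, hsq]
    · intro j; fin_cases j <;> simp [hc0, hc1]
  · set g : ℤ := (Int.gcd (c 0) (c 1) : ℤ) with hgdef
    have hg : g ≠ 0 := by
      simp only [hgdef, ne_eq, Int.natCast_eq_zero, Int.gcd_eq_zero_iff]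
      exact hc01
    have hdvd0 : g ∣ c 0 := Int.gcd_dvd_left _ _
    have hdvd1 : g ∣ c 1 := Int.gcd_dvd_right _ _
    set a' := c 0 / g with ha'
    set b' := c 1 / g with hb'
    have hga : g * a' = c 0 := Int.mul_ediv_cancel' hdvd0
    have hgb : g * b' = c 1 := Int.mul_ediv_cancel' hdvd1
    set u := Int.gcdA (c 0) (c 1) with hu
    set v := Int.gcdB (c 0) (c 1) with hv
    have hbez : g = c 0 * u + c 1 * v := Int.gcd_eq_gcd_ab (c 0) (c 1)
    have habz : a' * u + b' * v = 1 := by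
      apply mul_left_cancel₀ hg
      rw [mul_one]
      calc g * (a' * u + b' * v) = (g * a') * u + (g * b') * v := by ring
        _ = c 0 * u + c 1 * v := by rw [hga, hgb]
        _ = g := hbez.symm
    set α := Int.gcdA g (c 2) with hα
    set β := Int.gcdB g (c 2) with hβ
    have hbez2 : (1:ℤ) = g * α + c 2 * β := by
      have h2 : (Int.gcd g (c 2) : ℤ) = g * α + c 2 * β := Int.gcd_eq_gcd_ab g (c 2)
      rw [← h2]
      rw [hgdef] at h ⊢
      rw [h]
      norm_num
    set N : Matrix (Fin 3) (Fin 3) ℤ := !![g, 0, c 2; 0, 1, 0; -β, 0, α] with hN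
    set N' : Matrix (Fin 3) (Fin 3) ℤ := !![α, 0, -(c 2); 0, 1, 0; β, 0, g] with hN'
    set M : Matrix (Fin 3) (Fin 3) ℤ := !![a', b', 0; -v, u, 0; 0, 0, 1] with hM
    set M' : Matrix (Fin 3) (Fin 3) ℤ := !![u, -b', 0; v, a', 0; 0, 0, 1] with hM'
    have hNN' : N * N' = 1 := by
      ext i j
      fin_cases i <;> fin_cases j <;>
        simp [hN, hN', Matrix.mul_apply, Fin.sum_univ_three, Matrix.one_apply, Matrix.vecHead,
          Matrix.vecTail] <;>
        linarith [hbez2]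
    have hN'N : N' * N = 1 := by
      ext i j
      fin_cases i <;> fin_cases j <;>
        simp [hN, hN', Matrix.mul_apply, Fin.sum_univ_three, Matrix.one_apply, Matrix.vecHead,
          Matrix.vecTail] <;>
        linarith [hbez2]
    have hMM' : M * M' = 1 := by
      ext i j
      fin_cases i <;> fin_cases j <;>
        simp [hM, hM', Matrix.mul_apply, Fin.sum_univ_three, Matrix.one_apply, Matrix.vecHead,
          Matrix.vecTail] <;>
        linarith [habz]
    have hM'M : M' * M = 1 := by
      ext i j
      fin_cases i <;> fin_cases j <;>
        simp [hM, hM', Matrix.mul_apply, Fin.sum_univ_three, Matrix.one_apply, Matrix.vecHead,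
          Matrix.vecTail] <;>
        linarith [habz]
    refine ⟨N * M, M' * N', ?_, ?_, ?_⟩
    · calc N * M * (M' * N') = N * (M * M') * N' := by noncomm_ring
        _ = N * N' := by rw [hMM', Matrix.mul_one]
        _ = 1 := hNN'
    · calc M' * N' * (N * M) = M' * (N' * N) * M := by noncomm_ring
        _ = M' * M := by rw [hN'N, Matrix.mul_one]
        _ = 1 := hM'M
    · intro j
      fin_cases j <;>
        simp [hN, hM, Matrix.mul_apply, Fin.sum_univ_three, Matrix.vecHead, Matrix.vecTail] <;>
        linarith [hga, hgb]

end Completion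

section RealStuff

lemma cast_form {R S : Type*} [CommRing R] [CommRing S] (f : R →+* S) {n : ℕ}
    (K : Matrix (Fin n) (Fin n) R) (x y : Fin n → R) :
    f (x ⬝ᵥ K *ᵥ y) = (fun i => f (x i)) ⬝ᵥ (K.map f) *ᵥ (fun i => f (y i)) := by
  rw [RingHom.map_dotProduct]
  congr 1
  funext i
  exact RingHom.map_mulVec f K y i

lemma exists_neg_vec (K : Matrix (Fin 3) (Fin 3) ℤ) (Q : Matrix (Fin 3) (Fin 3) ℝ)
    (hcong : Qᵀ * K.map (Int.cast : ℤ → ℝ) * Q = Matrix.diagonal ![1,1,-1]) :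
    ∃ v : Fin 3 → ℤ, v ≠ 0 ∧ v ⬝ᵥ K *ᵥ v < 0 := by
  set Kr := K.map (Int.cast : ℤ → ℝ) with hKr
  have hcont : Continuous (fun x : Fin 3 → ℝ => x ⬝ᵥ Kr *ᵥ x) := by
    show Continuous (fun x : Fin 3 → ℝ => ∑ i, x i * ∑ j, Kr i j * x j)
    apply continuous_finset_sum
    intro i _
    exact (continuous_apply i).mul
      (continuous_finset_sum _ fun j _ => continuous_const.mul (continuous_apply j))
  set U : Set (Fin 3 → ℝ) := (fun x : Fin 3 → ℝ => x ⬝ᵥ Kr *ᵥ x) ⁻¹' Set.Iio 0 with hU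
  have hopen : IsOpen U := isOpen_Iio.preimage hcont
  have hne : U.Nonempty := by
    refine ⟨fun i => Q i 2, ?_⟩
    have h1 : (fun a => Q a 2) ⬝ᵥ Kr *ᵥ (fun a => Q a 2) = (Qᵀ * Kr * Q) 2 2 :=
      (congr_entry Q Kr 2 2).symm
    have h2 : (Qᵀ * Kr * Q) 2 2 = -1 := by rw [hcong]; simp
    simp only [hU, Set.mem_preimage, Set.mem_Iio]
    rw [h1, h2]; norm_num
  have hdense : Dense (Set.pi Set.univ (fun _ : Fin 3 => Set.range ((↑) : ℚ → ℝ))) :=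
    dense_pi Set.univ (fun i _ => Rat.denseRange_cast)
  obtain ⟨x, hxs, hxU⟩ := hdense.exists_mem_open hopen hne
  have hxq : ∀ i, ∃ qi : ℚ, (qi : ℝ) = x i := fun i => hxs i (Set.mem_univ i)
  choose q hq using hxq
  have hxfun : (fun i => ((q i : ℝ))) = x := funext hq
  set Kq := K.map (Int.cast : ℤ → ℚ) with hKq
  have hvQ : q ⬝ᵥ Kq *ᵥ q < 0 := by
    have hcast : ((q ⬝ᵥ Kq *ᵥ q : ℚ) : ℝ) = (fun i => ((q i : ℝ))) ⬝ᵥ Kr *ᵥ (fun i => ((q i : ℝ))) := by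
      have h := cast_form (Rat.castHom ℝ) Kq q q
      simp only [Rat.coe_castHom] at h
      have hmm : (K.map (Int.cast : ℤ → ℚ)).map (Rat.cast : ℚ → ℝ) = K.map (Int.cast : ℤ → ℝ) := by
        rw [Matrix.map_map]; ext i j; simp
      rw [h, hKq, hmm, hKr]
    have hlt : (fun i => ((q i : ℝ))) ⬝ᵥ Kr *ᵥ (fun i => ((q i : ℝ))) < 0 := by
      rw [hxfun]; exact hxU
    rw [← hcast] at hlt
    exact_mod_cast hlt
  set d : ℤ := ((q 0).den : ℤ) * ((q 1).den : ℤ) * ((q 2).den : ℤ) with hd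
  have hdpos : 0 < d := by
    have h0 := (q 0).pos
    have h1 := (q 1).pos
    have h2 := (q 2).pos
    positivity
  have hden : ∀ i, ((q i).den : ℤ) ∣ d := by
    intro i
    fin_cases i
    · show ((q 0).den : ℤ) ∣ d
      exact ⟨((q 1).den : ℤ) * ((q 2).den : ℤ), by rw [hd]; ring⟩
    · show ((q 1).den : ℤ) ∣ d
      exact ⟨((q 0).den : ℤ) * ((q 2).den : ℤ), by rw [hd]; ring⟩
    · show ((q 2).den : ℤ) ∣ d
      exact ⟨((q 0).den : ℤ) * ((q 1).den : ℤ), by rw [hd]; ring⟩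
  set v : Fin 3 → ℤ := fun i => (q i).num * (d / ((q i).den : ℤ)) with hv
  have hvq : ∀ i, ((v i : ℚ)) = (d : ℚ) * q i := by
    intro i
    have he : ((q i).den : ℤ) * (d / ((q i).den : ℤ)) = d := Int.mul_ediv_cancel' (hden i)
    have hqden : ((q i).den : ℚ) * q i = ((q i).num : ℚ) := Rat.den_mul_eq_num (q i)
    calc ((v i : ℚ)) = ((q i).num : ℚ) * (((d / ((q i).den : ℤ)) : ℤ) : ℚ) := by
          rw [hv]; push_cast; ring
      _ = (((q i).den : ℚ) * q i) * (((d / ((q i).den : ℤ)) : ℤ) : ℚ) := by rw [hqden]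
      _ = ((((q i).den : ℤ) * (d / ((q i).den : ℤ)) : ℤ) : ℚ) * q i := by push_cast; ring
      _ = (d : ℚ) * q i := by rw [he]
  have hvfun : (fun i => ((v i : ℚ))) = (d : ℚ) • q := by
    funext i
    rw [hvq i]
    rfl
  have hVform : (fun i => ((v i : ℚ))) ⬝ᵥ Kq *ᵥ (fun i => ((v i : ℚ))) = ((d:ℚ) * d) * (q ⬝ᵥ Kq *ᵥ q) := by
    rw [hvfun, smul_dotProduct, mulVec_smul, dotProduct_smul, smul_eq_mul, smul_eq_mul]
    ring
  have hval : v ⬝ᵥ K *ᵥ v < 0 := by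
    have hcast := cast_form (Int.castRingHom ℚ) K v v
    simp only [Int.coe_castRingHom] at hcast
    have : ((v ⬝ᵥ K *ᵥ v : ℤ) : ℚ) < 0 := by
      rw [hcast, ← hKq]
      show (fun i => ((v i : ℚ))) ⬝ᵥ Kq *ᵥ (fun i => ((v i : ℚ))) < 0
      rw [hVform]
      apply mul_neg_of_pos_of_neg
      · have : (0:ℚ) < (d:ℚ) := by exact_mod_cast hdpos
        positivity
      · exact hvQ
    exact_mod_cast this
  refine ⟨v, ?_, hval⟩
  intro h0
  rw [h0] at hval
  simp at hval

lemma real_ineq_aux (A0 A1 A2 B0 B1 B2 : ℝ) (hQa : A0^2+A1^2-A2^2 < 0)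
    (hQb : B0^2+B1^2-B2^2 ≤ 0) (hQab : A0*B0+A1*B1-A2*B2 = 0)
    (hbne : ¬(B0 = 0 ∧ B1 = 0 ∧ B2 = 0)) : False := by
  have e1 : A2^2*(B0^2+B1^2-B2^2) ≤ 0 := mul_nonpos_of_nonneg_of_nonpos (sq_nonneg A2) hQb
  have e2 : B2^2*(A0^2+A1^2-A2^2) ≤ 0 := mul_nonpos_of_nonneg_of_nonpos (sq_nonneg B2) hQa.le
  have e3 : A2*B2*(A0*B0+A1*B1-A2*B2) = 0 := by rw [hQab, mul_zero]
  have h1 : (A2*B0-B2*A0)^2 + (A2*B1-B2*A1)^2 ≤ 0 := by nlinarith [e1, e2, e3]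
  have hc0 : A2*B0-B2*A0 = 0 := by
    have : (A2*B0-B2*A0)^2 = 0 :=
      le_antisymm (by nlinarith [sq_nonneg (A2*B1-B2*A1)]) (sq_nonneg _)
    exact pow_eq_zero_iff (by norm_num) |>.mp this
  have hc1 : A2*B1-B2*A1 = 0 := by
    have : (A2*B1-B2*A1)^2 = 0 :=
      le_antisymm (by nlinarith [sq_nonneg (A2*B0-B2*A0)]) (sq_nonneg _)
    exact pow_eq_zero_iff (by norm_num) |>.mp this
  by_cases hA2 : A2 = 0
  · rw [hA2] at hQa
    nlinarith [sq_nonneg A0, sq_nonneg A1, hQa]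
  · have hkey : B2 * (A0^2+A1^2-A2^2) = 0 := by nlinarith [hQab, hc0, hc1]
    have hB2 : B2 = 0 := by
      rcases mul_eq_zero.mp hkey with h | h
      · exact h
      · exfalso; rw [h] at hQa; exact lt_irrefl 0 hQa
    have hB0 : B0 = 0 := by
      rw [hB2] at hc0
      have h2 : A2 * B0 = 0 := by linarith
      rcases mul_eq_zero.mp h2 with h | h
      · exact absurd h hA2
      · exact h
    have hB1 : B1 = 0 := by
      rw [hB2] at hc1
      have h2 : A2 * B1 = 0 := by linarith
      rcases mul_eq_zero.mp h2 with h | h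
      · exact absurd h hA2
      · exact h
    exact hbne ⟨hB0, hB1, hB2⟩

set_option maxHeartbeats 1000000 in
lemma posdef_perp (K : Matrix (Fin 3) (Fin 3) ℤ) (Q : Matrix (Fin 3) (Fin 3) ℝ)
    (hQ : IsUnit Q.det)
    (hcong : Qᵀ * K.map (Int.cast : ℤ → ℝ) * Q = Matrix.diagonal ![1,1,-1])
    (v x : Fin 3 → ℤ) (hv : v ⬝ᵥ K *ᵥ v < 0) (hvx : v ⬝ᵥ K *ᵥ x = 0) (hx : x ≠ 0) :
    0 < x ⬝ᵥ K *ᵥ x := by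
  by_contra hcon
  push_neg at hcon
  set Kr := K.map (Int.cast : ℤ → ℝ) with hKr
  set D : Matrix (Fin 3) (Fin 3) ℝ := Matrix.diagonal ![1,1,-1] with hDdef
  -- real versions of the vectors
  set V : Fin 3 → ℝ := fun i => ((v i : ℝ)) with hV
  set X : Fin 3 → ℝ := fun i => ((x i : ℝ)) with hX
  have hVform : V ⬝ᵥ Kr *ᵥ V < 0 := by
    have h3 := cast_form (Int.castRingHom ℝ) K v v
    simp only [Int.coe_castRingHom] at h3
    have h2 : ((v ⬝ᵥ K *ᵥ v : ℤ) : ℝ) < 0 := by exact_mod_cast hv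
    rw [h3] at h2
    exact h2
  have hXform : X ⬝ᵥ Kr *ᵥ X ≤ 0 := by
    have h3 := cast_form (Int.castRingHom ℝ) K x x
    simp only [Int.coe_castRingHom] at h3
    have h2 : ((x ⬝ᵥ K *ᵥ x : ℤ) : ℝ) ≤ 0 := by exact_mod_cast hcon
    rw [h3] at h2
    exact h2
  have hVXform : V ⬝ᵥ Kr *ᵥ X = 0 := by
    have h3 := cast_form (Int.castRingHom ℝ) K v x
    simp only [Int.coe_castRingHom] at h3
    have h2 : ((v ⬝ᵥ K *ᵥ x : ℤ) : ℝ) = 0 := by exact_mod_cast congrArg (fun z : ℤ => (z:ℝ)) hvx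
    rw [h3] at h2
    exact h2
  have hXne : X ≠ 0 := by
    intro h
    apply hx
    funext i
    have := congrFun h i
    simpa [hX] using this
  -- change coordinates
  have hKrD : Kr = Q⁻¹ᵀ * D * Q⁻¹ := by
    have h1 : Q * Q⁻¹ = 1 := mul_nonsing_inv Q hQ
    have hQt : Q⁻¹ᵀ * Qᵀ = 1 := by rw [← transpose_mul, h1, transpose_one]
    calc Kr = 1 * Kr * 1 := by rw [Matrix.one_mul, Matrix.mul_one]
      _ = (Q⁻¹ᵀ * Qᵀ) * Kr * (Q * Q⁻¹) := by rw [hQt, h1]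
      _ = Q⁻¹ᵀ * (Qᵀ * Kr * Q) * Q⁻¹ := by simp only [Matrix.mul_assoc]
      _ = Q⁻¹ᵀ * D * Q⁻¹ := by rw [hcong]
  set a : Fin 3 → ℝ := Q⁻¹ *ᵥ V with ha
  set b : Fin 3 → ℝ := Q⁻¹ *ᵥ X with hb
  have hform : ∀ y z : Fin 3 → ℝ, y ⬝ᵥ Kr *ᵥ z = (Q⁻¹ *ᵥ y) ⬝ᵥ D *ᵥ (Q⁻¹ *ᵥ z) := by
    intro y z
    rw [hKrD]
    exact vec_congr_form (Q⁻¹) D y z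
  have hQa : a ⬝ᵥ D *ᵥ a < 0 := by rw [← hform]; exact hVform
  have hQb : b ⬝ᵥ D *ᵥ b ≤ 0 := by rw [← hform]; exact hXform
  have hQab : a ⬝ᵥ D *ᵥ b = 0 := by rw [← hform]; exact hVXform
  have hbne : b ≠ 0 := by
    intro h
    apply hXne
    have : Q *ᵥ b = Q *ᵥ (Q⁻¹ *ᵥ X) := by rw [hb]
    rw [h, mulVec_zero, mulVec_mulVec, mul_nonsing_inv Q hQ, one_mulVec] at this
    exact this.symm
  -- expand the diagonal form
  have hexp2 : ∀ y z : Fin 3 → ℝ, y ⬝ᵥ D *ᵥ z = y 0 * z 0 + y 1 * z 1 - y 2 * z 2 := by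
    intro y z
    have hmv : ∀ i, (D *ᵥ z) i = ![(1:ℝ),1,-1] i * z i := fun i => mulVec_diagonal _ z i
    calc y ⬝ᵥ D *ᵥ z = ∑ i, y i * (D *ᵥ z) i := rfl
      _ = ∑ i, y i * (![(1:ℝ),1,-1] i * z i) := by
          exact Finset.sum_congr rfl fun i _ => by rw [hmv i]
      _ = y 0 * z 0 + y 1 * z 1 - y 2 * z 2 := by
          rw [Fin.sum_univ_three]
          norm_num [sub_eq_add_neg, Matrix.cons_val_two, Matrix.tail_cons, Matrix.head_cons]
  have hexp : ∀ y : Fin 3 → ℝ, y ⬝ᵥ D *ᵥ y = y 0 ^ 2 + y 1 ^ 2 - y 2 ^ 2 := by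
    intro y
    rw [hexp2]
    ring
  rw [hexp] at hQa hQb
  rw [hexp2] at hQab
  exact real_ineq_aux (a 0) (a 1) (a 2) (b 0) (b 1) (b 2) hQa hQb hQab
    (fun ⟨h0, h1, h2⟩ => hbne (funext fun i => by fin_cases i <;> assumption))

end RealStuff

section MainLemma

set_option maxHeartbeats 2000000 in
theorem ternary_unimodular_sig21 (K : Matrix (Fin 3) (Fin 3) ℤ) (hsymm : K.IsSymm)
    (hunit : IsUnit K.det) (Q : Matrix (Fin 3) (Fin 3) ℝ) (hQu : IsUnit Q.det)
    (hcong : Qᵀ * K.map (Int.cast : ℤ → ℝ) * Q = Matrix.diagonal ![1,1,-1]) :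
    ∃ M : Matrix (Fin 3) (Fin 3) ℤ, IsUnit M.det ∧
      Mᵀ * K * M = Matrix.diagonal ![1,1,-1] := by
  -- Step 0 : det K = -1
  have hQne : Q.det ≠ 0 := IsUnit.ne_zero (by simpa using hQu)
  have hdetK : K.det = -1 := by
    have hd1 : Qᵀ.det * (K.map (Int.cast : ℤ → ℝ)).det * Q.det = -1 := by
      rw [← det_mul, ← det_mul, hcong]
      simp [det_diagonal, Fin.prod_univ_three]
    rw [det_transpose] at hd1
    have hmapdet : (K.map (Int.cast : ℤ → ℝ)).det = ((K.det : ℝ)) := by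
      have := RingHom.map_det (Int.castRingHom ℝ) K
      simp only [Int.coe_castRingHom] at this
      exact this.symm
    rw [hmapdet] at hd1
    have hsq : 0 < Q.det ^ 2 := by positivity
    have hneg : ((K.det : ℝ)) < 0 := by nlinarith [hd1, hsq]
    have h1 : K.det < 0 := by exact_mod_cast hneg
    rcases Int.isUnit_iff.mp hunit with h | h
    · omega
    · exact h
  -- Step 1 : minimal negative value
  obtain ⟨v0, hv0ne, hv0⟩ := exists_neg_vec K Q hcong
  set P : ℕ → Prop := fun n => 0 < n ∧ ∃ v : Fin 3 → ℤ, v ≠ 0 ∧ v ⬝ᵥ K *ᵥ v = -(n:ℤ) with hPdef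
  haveI : DecidablePred P := fun _ => Classical.dec _
  have hPex : ∃ n, P n := by
    refine ⟨(-(v0 ⬝ᵥ K *ᵥ v0)).toNat, ?_, v0, hv0ne, ?_⟩
    · omega
    · omega
  set m := Nat.find hPex with hm
  obtain ⟨hmpos, v, hvne, hvQ⟩ := Nat.find_spec hPex
  rw [← hm] at hmpos hvQ
  have hmin : ∀ k, k < m → ¬ P k := fun k hk => Nat.find_min hPex hk
  -- Step 2 : v is primitive
  have hvprim : Int.gcd (Int.gcd (v 0) (v 1)) (v 2) = 1 := by
    set g := Int.gcd (Int.gcd (v 0) (v 1)) (v 2) with hg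
    have hgdvd : ∀ i, ((g : ℤ)) ∣ v i := by
      intro i
      fin_cases i
      · show ((g:ℤ)) ∣ v 0
        exact dvd_trans (Int.gcd_dvd_left _ _) (Int.gcd_dvd_left _ _)
      · show ((g:ℤ)) ∣ v 1
        exact dvd_trans (Int.gcd_dvd_left _ _) (Int.gcd_dvd_right _ _)
      · show ((g:ℤ)) ∣ v 2
        exact Int.gcd_dvd_right _ _
    have hgne : g ≠ 0 := by
      intro h0
      apply hvne
      funext i
      have := hgdvd i
      rw [h0] at this
      simpa using this
    by_contra hg1
    have hg2 : 2 ≤ g := by omega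
    set w : Fin 3 → ℤ := fun i => v i / (g:ℤ) with hw
    have hvw : ∀ i, (g:ℤ) * w i = v i := fun i => Int.mul_ediv_cancel' (hgdvd i)
    have hvsmul : v = (g:ℤ) • w := by
      funext i
      exact (hvw i).symm
    have hwne : w ≠ 0 := by
      intro h0
      apply hvne
      rw [hvsmul, h0, smul_zero]
    have hQg : v ⬝ᵥ K *ᵥ v = (g:ℤ) * (g:ℤ) * (w ⬝ᵥ K *ᵥ w) := by
      rw [hvsmul, smul_dotProduct, mulVec_smul, dotProduct_smul, smul_eq_mul, smul_eq_mul]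
      ring
    set t : ℤ := -(w ⬝ᵥ K *ᵥ w) with ht
    have htm : (g:ℤ) * (g:ℤ) * t = (m:ℤ) := by
      rw [ht]
      rw [hQg] at hvQ
      linarith
    have hgg : (4:ℤ) ≤ (g:ℤ) * (g:ℤ) := by
      have : (2:ℤ) ≤ (g:ℤ) := by exact_mod_cast hg2
      nlinarith
    have htpos : 0 < t := by nlinarith [htm, hgg]
    have htlt : t < (m:ℤ) := by nlinarith [htm, hgg, htpos]
    have hPk : P t.toNat := by
      refine ⟨by omega, w, hwne, ?_⟩
      have : ((t.toNat : ℤ)) = t := Int.toNat_of_nonneg htpos.le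
      rw [this, ht]
      ring
    exact hmin t.toNat (by omega) hPk
  -- Step 3 : c := K v is primitive
  set c : Fin 3 → ℤ := K *ᵥ v with hc
  have hKK' : K * K⁻¹ = 1 := mul_nonsing_inv K hunit
  have hK'K : K⁻¹ * K = 1 := nonsing_inv_mul K hunit
  have hvc : v = K⁻¹ *ᵥ c := by
    rw [hc, mulVec_mulVec, hK'K, one_mulVec]
  have hcprim : Int.gcd (Int.gcd (c 0) (c 1)) (c 2) = 1 := by
    set h : ℕ := Int.gcd (Int.gcd (c 0) (c 1)) (c 2) with hh
    have hdvdc : ∀ i, ((h:ℤ)) ∣ c i := by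
      intro i
      fin_cases i
      · show ((h:ℤ)) ∣ c 0
        exact dvd_trans (Int.gcd_dvd_left _ _) (Int.gcd_dvd_left _ _)
      · show ((h:ℤ)) ∣ c 1
        exact dvd_trans (Int.gcd_dvd_left _ _) (Int.gcd_dvd_right _ _)
      · show ((h:ℤ)) ∣ c 2
        exact Int.gcd_dvd_right _ _
    have hdvdv : ∀ i, ((h:ℤ)) ∣ v i := by
      intro i
      rw [hvc]
      show ((h:ℤ)) ∣ ∑ j, K⁻¹ i j * c j
      exact Finset.dvd_sum fun j _ => Dvd.dvd.mul_left (hdvdc j) _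
    have hdvd1 : ((h:ℤ)) ∣ ((1:ℕ):ℤ) := by
      rw [← hvprim]
      exact Int.dvd_coe_gcd (Int.dvd_coe_gcd (hdvdv 0) (hdvdv 1)) (hdvdv 2)
    have := Int.ofNat_dvd.mp hdvd1
    exact Nat.dvd_one.mp this
  -- Step 4 : complete c to a basis, build T
  obtain ⟨A, A', hAA', hA'A, hArow⟩ := complete_primitive c hcprim
  set p2 : Fin 3 → ℤ := fun i => A' i 1 with hp2
  set p3 : Fin 3 → ℤ := fun i => A' i 2 with hp3
  have hcp : ∀ j : Fin 3, c ⬝ᵥ (fun i => A' i j) = (1 : Matrix (Fin 3) (Fin 3) ℤ) 0 j := by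
    intro j
    have h1 := congrFun (congrFun hAA' 0) j
    rw [mul_apply] at h1
    rw [← h1]
    exact Finset.sum_congr rfl fun k _ => by rw [hArow k]
  have hc2 : c ⬝ᵥ p2 = 0 := by
    rw [hp2, hcp 1]
    exact Matrix.one_apply_ne (by decide)
  have hc3 : c ⬝ᵥ p3 = 0 := by
    rw [hp3, hcp 2]
    exact Matrix.one_apply_ne (by decide)
  have hbv : ∀ y : Fin 3 → ℤ, v ⬝ᵥ K *ᵥ y = c ⬝ᵥ y := by
    intro y
    rw [dotProduct_mulVec, ← mulVec_transpose, hsymm.eq, ← hc]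
  set T : Matrix (Fin 3) (Fin 3) ℤ :=
    !![v 0, p2 0, p3 0; v 1, p2 1, p3 1; v 2, p2 2, p3 2] with hT
  have hcol0 : (fun a => T a 0) = v := by
    funext a; fin_cases a <;> rfl
  have hcol1 : (fun a => T a 1) = p2 := by
    funext a; fin_cases a <;> rfl
  have hcol2 : (fun a => T a 2) = p3 := by
    funext a; fin_cases a <;> rfl
  set G1 : Matrix (Fin 3) (Fin 3) ℤ := Tᵀ * K * T with hG1
  have hG100 : G1 0 0 = -(m:ℤ) := by
    rw [hG1, congr_entry, hcol0, hvQ]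
  have hG101 : G1 0 1 = 0 := by
    rw [hG1, congr_entry, hcol0, hcol1, hbv, hc2]
  have hG102 : G1 0 2 = 0 := by
    rw [hG1, congr_entry, hcol0, hcol2, hbv, hc3]
  have hG1s : G1.IsSymm := by rw [hG1]; exact isSymm_congr hsymm T
  have hG110 : G1 1 0 = 0 := by rw [hG1s.apply 0 1]; exact hG101
  have hG120 : G1 2 0 = 0 := by rw [hG1s.apply 0 2]; exact hG102
  -- Step 5 : determinant of T
  have hATentry : ∀ (i : Fin 3) (j : Fin 3), j ≠ 0 → (A * T) i j = (1 : Matrix (Fin 3) (Fin 3) ℤ) i j := by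
    intro i j hj
    rw [mul_apply]
    have h1 := congrFun (congrFun hAA' i) j
    rw [mul_apply] at h1
    rw [← h1]
    apply Finset.sum_congr rfl
    intro k _
    congr 1
    fin_cases j
    · exact absurd rfl hj
    · show T k 1 = A' k 1
      have := congrFun hcol1 k
      exact this
    · show T k 2 = A' k 2
      have := congrFun hcol2 k
      exact this
  have hAT00 : (A * T) 0 0 = -(m:ℤ) := by
    rw [mul_apply]
    have : ∑ k, A 0 k * T k 0 = ∑ k, c k * v k := by
      apply Finset.sum_congr rfl
      intro k _
      rw [hArow k]
      congr 1
      exact congrFun hcol0 k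
    rw [this]
    have : ∑ k, c k * v k = c ⬝ᵥ v := rfl
    rw [this, ← hbv v, hvQ]
  have hdetAT : (A*T).det = -(m:ℤ) := by
    rw [det_fin_three]
    rw [hAT00, hATentry 0 1 (by decide), hATentry 0 2 (by decide), hATentry 1 1 (by decide),
        hATentry 1 2 (by decide), hATentry 2 1 (by decide), hATentry 2 2 (by decide)]
    norm_num [Matrix.one_apply, Fin.ext_iff]
  have hdetT : A.det * T.det = -(m:ℤ) := by rw [← det_mul]; exact hdetAT
  have hAu : IsUnit A.det := isUnit_det_of_right_inverse hAA'
  have hmZ : 0 < (m:ℤ) := by exact_mod_cast hmpos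
  have hTdet : T.det = -(m:ℤ) ∨ T.det = (m:ℤ) := by
    rcases Int.isUnit_iff.mp hAu with h | h
    · left; rw [h, one_mul] at hdetT; exact hdetT
    · right; rw [h] at hdetT; linarith
  have hTne : T.det ≠ 0 := by rcases hTdet with h | h <;> omega
  have hTsq : T.det * T.det = (m:ℤ) * (m:ℤ) := by
    rcases hTdet with h | h <;> rw [h] <;> ring
  have hdetG1 : G1.det = T.det * T.det * K.det := by
    rw [hG1, det_mul, det_mul, det_transpose]; ring
  set C : Matrix (Fin 2) (Fin 2) ℤ := !![G1 1 1, G1 1 2; G1 2 1, G1 2 2] with hCdef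
  have hC00 : C 0 0 = G1 1 1 := rfl
  have hC01 : C 0 1 = G1 1 2 := rfl
  have hC10 : C 1 0 = G1 2 1 := rfl
  have hC11 : C 1 1 = G1 2 2 := rfl
  have hdetG1C : G1.det = -(m:ℤ) * C.det := by
    rw [det_fin_three, det_fin_two, hG100, hG101, hG102, hG110, hG120, hC00, hC01, hC10, hC11]
    ring
  have hCdet : C.det = (m:ℤ) := by
    have h1 : -(m:ℤ) * C.det = -((m:ℤ)*(m:ℤ)) := by
      rw [← hdetG1C, hdetG1, hTsq, hdetK]; ring
    have h2 : (m:ℤ) * C.det = (m:ℤ) * (m:ℤ) := by linarith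
    exact mul_left_cancel₀ (by omega) h2
  have hCs : C.IsSymm := by
    apply Matrix.IsSymm.ext
    intro i j
    fin_cases i <;> fin_cases j
    · rfl
    · show C 1 0 = C 0 1
      rw [hC10, hC01]; exact hG1s.apply 1 2
    · show C 0 1 = C 1 0
      rw [hC10, hC01]; exact (hG1s.apply 1 2).symm
    · rfl
  have hvlt : v ⬝ᵥ K *ᵥ v < 0 := by rw [hvQ]; omega
  have hCpos : ∀ x : Fin 2 → ℤ, x ≠ 0 → 0 < x ⬝ᵥ C *ᵥ x := by
    intro x hx
    set y : Fin 3 → ℤ := ![0, x 0, x 1] with hy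
    have hyC : y ⬝ᵥ G1 *ᵥ y = x ⬝ᵥ C *ᵥ x := by
      simp [hy, hCdef, dotProduct, mulVec, Fin.sum_univ_three, Fin.sum_univ_two]
      try ring
    have hyne : y ≠ 0 := by
      intro h0
      apply hx
      funext i
      fin_cases i
      · exact congrFun h0 1
      · exact congrFun h0 2
    have huy : v ⬝ᵥ K *ᵥ (T *ᵥ y) = 0 := by
      rw [hbv]
      have hexp : c ⬝ᵥ (T *ᵥ y) = x 0 * (c ⬝ᵥ p2) + x 1 * (c ⬝ᵥ p3) := by
        simp [hy, hT, dotProduct, mulVec, Fin.sum_univ_three]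
        ring
      rw [hexp, hc2, hc3]; ring
    have hune : T *ᵥ y ≠ 0 := fun h0 => hyne (mulVec_eq_zero_iff T hTne h0)
    have hres := posdef_perp K Q hQu hcong v (T *ᵥ y) hvlt huy hune
    rw [← vec_congr_form T K y y, ← hG1, hyC] at hres
    exact hres
  -- Step 8 : m = 1
  have hm1 : m = 1 := by
    by_contra hne1
    have hm2 : 2 ≤ m := by omega
    obtain ⟨u2, hu2ne, hu2pos, hu2b⟩ := binary_min C hCs hCpos
    rw [hCdet] at hu2b
    set q : ℤ := u2 ⬝ᵥ C *ᵥ u2 with hq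
    have hm2' : (2:ℤ) ≤ (m:ℤ) := by exact_mod_cast hm2
    have hqm : q < (m:ℤ) := by nlinarith [hu2pos, hu2b, hm2']
    set y : Fin 3 → ℤ := ![1, u2 0, u2 1] with hy
    have hqexp : q = u2 0 * (C 0 0 * u2 0 + C 0 1 * u2 1) + u2 1 * (C 1 0 * u2 0 + C 1 1 * u2 1) := by
      rw [hq]; simp [dotProduct, mulVec, Fin.sum_univ_two]; try ring
    have hyval : y ⬝ᵥ G1 *ᵥ y = -(m:ℤ) + q := by
      rw [hqexp, hC00, hC01, hC10, hC11]
      simp [hy, dotProduct, mulVec, Fin.sum_univ_three]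
      rw [hG100, hG101, hG102, hG110, hG120]
      ring
    have hwne : T *ᵥ y ≠ 0 := by
      intro h0
      have h1 := mulVec_eq_zero_iff T hTne h0
      have h2 := congrFun h1 0
      simp [hy] at h2
    set k : ℕ := ((m:ℤ) - q).toNat with hk
    have hkz : ((k:ℤ)) = (m:ℤ) - q := Int.toNat_of_nonneg (by omega)
    have hPk : P k := by
      refine ⟨by omega, T *ᵥ y, hwne, ?_⟩
      rw [← vec_congr_form T K y y, ← hG1, hyval, hkz]
      ring
    exact hmin k (by omega) hPk
  -- Step 9 : assemble the final base change
  have hvQ1 : v ⬝ᵥ K *ᵥ v = -1 := by rw [hvQ, hm1]; norm_num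
  have hG100' : G1 0 0 = -1 := by rw [hG100, hm1]; norm_num
  have hCdet1 : C.det = 1 := by rw [hCdet, hm1]; norm_num
  clear hvQ1
  obtain ⟨Rb, hRbu, hRbC⟩ := binary_unimodular C hCs hCpos hCdet1
  set E : Matrix (Fin 3) (Fin 3) ℤ := !![1,0,0; 0, Rb 0 0, Rb 0 1; 0, Rb 1 0, Rb 1 1] with hE
  have hEdet : E.det = Rb.det := by
    rw [hE, det_fin_three, det_fin_two]
    simp
  have hR00 := congrFun (congrFun hRbC 0) 0
  have hR01 := congrFun (congrFun hRbC 0) 1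
  have hR10 := congrFun (congrFun hRbC 1) 0
  have hR11 := congrFun (congrFun hRbC 1) 1
  simp only [mul_apply, Fin.sum_univ_two, transpose_apply, Matrix.one_apply, hCdef,
    Matrix.cons_val', Matrix.cons_val_zero, Matrix.cons_val_one, Matrix.head_cons,
    Matrix.empty_val', Matrix.cons_val_fin_one, Matrix.head_fin_const, Matrix.of_apply,
    if_true, if_false] at hR00 hR01 hR10 hR11
  norm_num at hR00 hR01 hR10 hR11
  have hgg00 : (Tᵀ*K*T) 0 0 = -1 := by rw [← hG1]; exact hG100'
  have hgg01 : (Tᵀ*K*T) 0 1 = 0 := by rw [← hG1]; exact hG101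
  have hgg02 : (Tᵀ*K*T) 0 2 = 0 := by rw [← hG1]; exact hG102
  have hgg10 : (Tᵀ*K*T) 1 0 = 0 := by rw [← hG1]; exact hG110
  have hgg20 : (Tᵀ*K*T) 2 0 = 0 := by rw [← hG1]; exact hG120
  have hEG : Eᵀ * G1 * E = Matrix.diagonal ![(-1:ℤ),1,1] := by
    ext i j
    rw [congr_entry E G1 i j]
    fin_cases i <;> fin_cases j <;>
      simp [hE, dotProduct, mulVec, Fin.sum_univ_three, Matrix.diagonal, Matrix.vecHead,
        Matrix.vecTail, hG100', hG101, hG102, hG110, hG120, hgg00, hgg01, hgg02, hgg10, hgg20] <;>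
      first
        | linear_combination hR00
        | linear_combination hR01
        | linear_combination hR10
        | linear_combination hR11
        | ring
  set Wp : Matrix (Fin 3) (Fin 3) ℤ := !![0,0,1;0,1,0;1,0,0] with hWp
  have hWdet : Wp.det = -1 := by rw [hWp, det_fin_three]; simp
  have hfinal : (T * E * Wp)ᵀ * K * (T * E * Wp) = Matrix.diagonal ![1,1,-1] := by
    have h1 : (T * E * Wp)ᵀ * K * (T * E * Wp) = Wpᵀ * (Eᵀ * (Tᵀ * K * T) * E) * Wp := by
      rw [transpose_mul, transpose_mul]
      simp only [Matrix.mul_assoc]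
    rw [h1, ← hG1, hEG]
    ext i j
    fin_cases i <;> fin_cases j <;>
      simp [hWp, Matrix.mul_apply, Fin.sum_univ_three, Matrix.diagonal, Matrix.vecHead,
        Matrix.vecTail, Matrix.transpose_apply]
  have hTu : IsUnit T.det := by
    rcases hTdet with h | h <;> rw [h, hm1] <;> norm_num
  have hMu : IsUnit (T * E * Wp).det := by
    rw [det_mul, det_mul, hEdet, hWdet]
    exact (hTu.mul hRbu).mul (Int.isUnit_iff.mpr (Or.inr rfl))
  exact ⟨T * E * Wp, hMu, hfinal⟩

end MainLemma
end AuxiliaryLemmas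

set_option maxHeartbeats 4000000 in
/-- An even lattice `S` of rank 3 and signature `(2,1)` with
discriminant group `(ℤ/2)³` satisfies: `S(1/2)` is an integral odd unimodular lattice
of signature `(2,1)`, `S ≅ diag(2,2,-2)`, and `S(1/2) ≅ ⟨1⟩⊕⟨1⟩⊕⟨-1⟩`. -/
theorem even_2elementary_rank3_sig21 (S : IntLattice) (hrk : S.rank = 3)
    (hev : S.IsEven) (hsig : S.HasSignature 2 1)
    (hdisc : Nonempty (S.discGroup ≃+ (Fin 3 → ZMod 2))) :
    (∀ i j, 2 ∣ S.gram i j) ∧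
    ¬ (S.halfL).IsEven ∧
    (S.halfL).IsUnimodular ∧
    (S.halfL).HasSignature 2 1 ∧
    IntLattice.Isometric S (diagL ![2, 2, -2]) ∧
    IntLattice.Isometric S.halfL (diagL ![1, 1, -1]) := by
  obtain ⟨r, G, hsym⟩ := S
  have hr : r = 3 := hrk
  subst hr
  set L : IntLattice := ⟨3, G, hsym⟩ with hL
  obtain ⟨hrank21, Q, hQu, hQc⟩ := hsig
  have hdiagfun : (fun i : Fin 3 => if (i:ℕ) < 2 then (1:ℝ) else -1) = ![1,1,-1] := by
    funext i; fin_cases i <;> norm_num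
  have hQc' : Qᵀ * (G.map (Int.cast : ℤ → ℝ)) * Q = Matrix.diagonal ![1,1,-1] := by
    rw [← hdiagfun]; exact hQc
  have hd : L.discGroup ≃+ (Fin 3 → ZMod 2) := Classical.choice hdisc
  set Gq : Matrix (Fin 3) (Fin 3) ℚ := G.map (Int.cast : ℤ → ℚ) with hGq
  have hdetG : G.det ≠ 0 := by
    have hd1 : Qᵀ.det * (G.map (Int.cast : ℤ → ℝ)).det * Q.det = -1 := by
      rw [← det_mul, ← det_mul, hQc']
      simp [det_diagonal, Fin.prod_univ_three, Matrix.cons_val_two, Matrix.tail_cons, Matrix.head_cons]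
      change ∏ i : Fin 3, ![(1:ℝ),1,-1] i = -1
      simp [Fin.prod_univ_three, Matrix.cons_val_two, Matrix.tail_cons, Matrix.head_cons]
    have hmapdet : (G.map (Int.cast : ℤ → ℝ)).det = ((G.det : ℝ)) := by
      have := RingHom.map_det (Int.castRingHom ℝ) G
      simp only [Int.coe_castRingHom] at this
      exact this.symm
    intro h0
    rw [det_transpose, hmapdet, h0] at hd1
    norm_num at hd1
  have hdetGq : IsUnit Gq.det := by
    have hq1 : Gq.det = ((G.det : ℚ)) := by
      have h6 := RingHom.map_det (Int.castRingHom ℚ) G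
      simp only [Int.coe_castRingHom, RingHom.mapMatrix_apply] at h6
      rw [hGq]
      exact h6.symm
    rw [hq1]
    simp only [isUnit_iff_ne_zero, ne_eq, Int.cast_eq_zero]
    exact hdetG
  have hGqi1 : Gq * Gq⁻¹ = 1 := mul_nonsing_inv Gq hdetGq
  have hGqi2 : Gq⁻¹ * Gq = 1 := nonsing_inv_mul Gq hdetGq
  have hGqsym : Gqᵀ = Gq := by rw [hGq]; exact (hsym.map _).eq
  have hsymm_dot : ∀ x z : Fin 3 → ℚ, x ⬝ᵥ Gq *ᵥ z = (Gq *ᵥ x) ⬝ᵥ z := by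
    intro x z
    rw [dotProduct_mulVec, ← mulVec_transpose, hGqsym]
  have hmem : ∀ (x : Fin 3 → ℚ) (w : Fin 3 → ℤ), Gq *ᵥ x = castVec w → x ∈ L.dualSub := by
    intro x w hx y
    refine ⟨w ⬝ᵥ y, ?_⟩
    show x ⬝ᵥ Gq *ᵥ (castVec y) = ((w ⬝ᵥ y : ℤ) : ℚ)
    rw [hsymm_dot, hx]
    have h2 := RingHom.map_dotProduct (Int.castRingHom ℚ) w y
    simp only [Int.coe_castRingHom] at h2
    rw [h2]
    rfl
  have hdvmem : ∀ w : Fin 3 → ℤ, (Gq⁻¹ *ᵥ castVec w) ∈ L.dualSub := by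
    intro w
    apply hmem _ w
    rw [mulVec_mulVec, hGqi1, one_mulVec]
  set dv : (Fin 3 → ℤ) → L.dualSub := fun w => ⟨Gq⁻¹ *ᵥ castVec w, hdvmem w⟩ with hdv
  set f : (Fin 3 → ℤ) → (Fin 3 → ZMod 2) := fun w => hd (L.dmk (dv w)) with hf
  have hcastadd : ∀ w w' : Fin 3 → ℤ, castVec (w + w') = castVec w + castVec w' := by
    intro w w'; funext i; simp [castVec]
  have hdv_add : ∀ w w', dv (w + w') = dv w + dv w' := by
    intro w w'
    apply Subtype.ext
    show Gq⁻¹ *ᵥ castVec (w + w') = (Gq⁻¹ *ᵥ castVec w) + (Gq⁻¹ *ᵥ castVec w')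
    rw [hcastadd, mulVec_add]
  have hdmk_add : ∀ a b : L.dualSub, L.dmk (a + b) = L.dmk a + L.dmk b := fun a b => rfl
  have hf_add : ∀ w w', f (w + w') = f w + f w' := by
    intro w w'
    show hd (L.dmk (dv (w+w'))) = hd (L.dmk (dv w)) + hd (L.dmk (dv w'))
    rw [hdv_add, hdmk_add, map_add]
  have hcastmul : ∀ u : Fin 3 → ℤ, castVec (G *ᵥ u) = Gq *ᵥ castVec u := by
    intro u
    funext i
    have h3 := RingHom.map_mulVec (Int.castRingHom ℚ) G u i
    simp only [Int.coe_castRingHom] at h3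
    rw [← hGq] at h3
    exact h3
  have hfG : ∀ u : Fin 3 → ℤ, f (G *ᵥ u) = 0 := by
    intro u
    have hval : ((dv (G *ᵥ u) : L.dualSub) : Fin 3 → ℚ) = castVec u := by
      show Gq⁻¹ *ᵥ castVec (G *ᵥ u) = castVec u
      rw [hcastmul, mulVec_mulVec, hGqi2, one_mulVec]
    have hmem2 : L.dmk (dv (G *ᵥ u)) = 0 := by
      apply (QuotientAddGroup.eq_zero_iff _).mpr
      rw [AddSubgroup.mem_addSubgroupOf]
      show ((dv (G *ᵥ u) : L.dualSub) : Fin 3 → ℚ) ∈ L.latticeIn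
      rw [hval]
      exact ⟨u, rfl⟩
    show hd (L.dmk (dv (G *ᵥ u))) = 0
    rw [hmem2, map_zero]
  have hftwo : ∀ u : Fin 3 → ℤ, f (u + u) = 0 := by
    intro u
    rw [hf_add]
    funext i
    have hz2 : ∀ z : ZMod 2, z + z = 0 := by decide
    exact hz2 _
  have hfsurj : ∀ t : Fin 3 → ZMod 2, ∃ w, f w = t := by
    intro t
    obtain ⟨dq, hdq⟩ := hd.surjective t
    obtain ⟨x, hx⟩ := QuotientAddGroup.mk_surjective dq
    have hxw : ∀ i : Fin 3, ∃ z : ℤ, (Gq *ᵥ (x : Fin 3 → ℚ)) i = (z:ℚ) := by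
      intro i
      obtain ⟨z, hz⟩ := x.2 (Pi.single i 1)
      refine ⟨z, ?_⟩
      have h1 : castVec (Pi.single i 1) = Pi.single i (1:ℚ) := by
        funext j
        rcases eq_or_ne j i with h | h
        · subst h; simp [castVec]
        · simp [castVec, Pi.single_apply, h]
      have h2 : (L.qbilin x (castVec (Pi.single i 1))) = (Gq *ᵥ (x : Fin 3 → ℚ)) i := by
        show (x : Fin 3 → ℚ) ⬝ᵥ Gq *ᵥ (castVec (Pi.single i 1)) = _
        rw [h1, hsymm_dot, dotProduct_single, mul_one]
      rw [← h2, hz]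
    choose w hw using hxw
    have hGx : Gq *ᵥ (x : Fin 3 → ℚ) = castVec w := funext fun i => hw i
    refine ⟨w, ?_⟩
    have hdvx : dv w = x := by
      apply Subtype.ext
      show Gq⁻¹ *ᵥ castVec w = (x : Fin 3 → ℚ)
      rw [← hGx, mulVec_mulVec, hGqi2, one_mulVec]
    show hd (L.dmk (dv w)) = t
    rw [hdvx]
    show hd (QuotientAddGroup.mk x) = t
    rw [hx, hdq]
  have hfker : ∀ w : Fin 3 → ℤ, f w = 0 → ∃ u, G *ᵥ u = w := by
    intro w h0
    have h1 : L.dmk (dv w) = 0 := by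
      apply hd.injective
      rw [map_zero]
      exact h0
    have h2 : ((dv w : L.dualSub) : Fin 3 → ℚ) ∈ L.latticeIn := by
      have h3 := (QuotientAddGroup.eq_zero_iff (dv w)).mp h1
      rwa [AddSubgroup.mem_addSubgroupOf] at h3
    obtain ⟨u, hu⟩ := h2
    refine ⟨u, ?_⟩
    have h3 : Gq *ᵥ castVec u = castVec w := by
      have h4 : (castVec u : Fin 3 → ℚ) = Gq⁻¹ *ᵥ castVec w := hu
      rw [h4, mulVec_mulVec, hGqi1, one_mulVec]
    rw [← hcastmul] at h3
    funext i
    have h5 := congrFun h3 i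
    simpa [castVec] using h5
  -- factor f through mod 2
  set F : (Fin 3 → ZMod 2) → (Fin 3 → ZMod 2) := fun t => f (fun i => (((t i).val : ℤ))) with hF
  have hFf : ∀ w : Fin 3 → ℤ, F (fun i => ((w i : ZMod 2))) = f w := by
    intro w
    set w' : Fin 3 → ℤ := fun i => ((((w i : ZMod 2)).val : ℤ)) with hw'
    have hdiff : ∀ i, 2 ∣ (w' i - w i) := by
      intro i
      have hcast : ((w' i : ℤ) : ZMod 2) = (w i : ZMod 2) := by
        rw [hw']
        push_cast
        simp [ZMod.natCast_val, ZMod.intCast_cast]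
      have hz : ((w' i - w i : ℤ) : ZMod 2) = 0 := by
        push_cast
        rw [sub_eq_zero]
        exact hcast
      exact (ZMod.intCast_zmod_eq_zero_iff_dvd _ 2).mp hz
    set u : Fin 3 → ℤ := fun i => (w' i - w i) / 2 with hu
    have hwu : w' = w + (u + u) := by
      funext i
      have h2 : 2 * ((w' i - w i)/2) = w' i - w i := Int.mul_ediv_cancel' (hdiff i)
      show w' i = w i + (u i + u i)
      have hui : u i = (w' i - w i) / 2 := rfl
      rw [hui]
      linarith [h2]
    show f w' = f w
    rw [hwu, hf_add w (u+u), hftwo u, add_zero]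
  have hFsurj : Function.Surjective F := by
    intro t
    obtain ⟨w, hwt⟩ := hfsurj t
    exact ⟨fun i => ((w i : ZMod 2)), by rw [hFf w]; exact hwt⟩
  have hFinj : Function.Injective F := Finite.injective_iff_surjective.mpr hFsurj
  have heven : ∀ i j, 2 ∣ G i j := by
    intro i j
    have h1 : f (G *ᵥ (Pi.single j 1)) = 0 := hfG _
    have h0 : f 0 = 0 := by
      have hz : (0 : Fin 3 → ℤ) = G *ᵥ 0 := by rw [mulVec_zero]
      rw [hz]
      exact hfG 0
    have h2 : F (fun i => (((G *ᵥ Pi.single j 1) i : ZMod 2))) =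
        F (fun i => (((0 : Fin 3 → ℤ) i : ZMod 2))) := by
      rw [hFf, hFf, h1, h0]
    have h3 := congrFun (hFinj h2) i
    have h4 : (G *ᵥ Pi.single j 1) i = G i j := by
      show (fun k => G i k) ⬝ᵥ Pi.single j 1 = G i j
      rw [dotProduct_single, mul_one]
    rw [h4] at h3
    simp only [Pi.zero_apply, Int.cast_zero] at h3
    exact (ZMod.intCast_zmod_eq_zero_iff_dvd _ 2).mp h3
  -- K = G/2
  set K : Matrix (Fin 3) (Fin 3) ℤ := G.map (fun z => z / 2) with hK
  have hGK : ∀ i j, G i j = 2 * K i j := by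
    intro i j
    exact (Int.mul_ediv_cancel' (heven i j)).symm
  have hG2K : G = (2:ℤ) • K := by
    ext i j
    rw [hGK i j]
    simp
  have hKsym : K.IsSymm := hsym.map _
  have hKsurj : ∀ u : Fin 3 → ℤ, ∃ z, K *ᵥ z = u := by
    intro u
    have h1 : f (u + u) = 0 := hftwo u
    obtain ⟨z, hz⟩ := hfker (u + u) h1
    refine ⟨z, ?_⟩
    rw [hG2K] at hz
    funext i
    have h2 := congrFun hz i
    rw [smul_mulVec] at h2
    have h3 : (2:ℤ) * (K *ᵥ z) i = u i + u i := h2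
    linarith [h3]
  have hKunit : IsUnit K.det := by
    have hcols : ∀ j : Fin 3, ∃ z, K *ᵥ z = Pi.single j 1 := fun j => hKsurj _
    choose zc hzc using hcols
    set H : Matrix (Fin 3) (Fin 3) ℤ := Matrix.of (fun i j => zc j i) with hH
    have hKH : K * H = 1 := by
      ext i j
      rw [mul_apply]
      have h1 : ∑ k, K i k * H k j = (K *ᵥ (zc j)) i := rfl
      rw [h1, hzc j]
      rcases eq_or_ne i j with h | h
      · subst h; simp [Matrix.one_apply]
      · simp [Pi.single_apply, Matrix.one_apply, h]
    exact isUnit_det_of_right_inverse hKH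
  -- the rescaled real congruence
  have hsqrt2 : Real.sqrt 2 ≠ 0 := by
    have : (0:ℝ) < Real.sqrt 2 := Real.sqrt_pos.mpr (by norm_num)
    linarith
  set Q2 : Matrix (Fin 3) (Fin 3) ℝ := (Real.sqrt 2) • Q with hQ2
  have hQ2u : IsUnit Q2.det := by
    rw [hQ2, det_smul]
    rw [isUnit_iff_ne_zero]
    exact mul_ne_zero (pow_ne_zero _ hsqrt2) (by rwa [isUnit_iff_ne_zero] at hQu)
  have hmap2 : G.map (Int.cast : ℤ → ℝ) = (2:ℝ) • K.map (Int.cast : ℤ → ℝ) := by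
    ext i j
    simp only [Matrix.map_apply, Matrix.smul_apply, smul_eq_mul]
    rw [hGK i j]
    push_cast
    ring
  have hKcong : Q2ᵀ * K.map (Int.cast : ℤ → ℝ) * Q2 = Matrix.diagonal ![1,1,-1] := by
    have h2 : Q2ᵀ * K.map (Int.cast : ℤ → ℝ) * Q2 =
        (Real.sqrt 2 * Real.sqrt 2) • (Qᵀ * K.map (Int.cast : ℤ → ℝ) * Q) := by
      rw [hQ2, transpose_smul, Matrix.smul_mul, Matrix.smul_mul, Matrix.mul_smul, smul_smul]
    have h3 : (2:ℝ) • (Qᵀ * K.map (Int.cast : ℤ → ℝ) * Q) = Matrix.diagonal ![1,1,-1] := by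
      rw [← hQc', hmap2]
      rw [Matrix.mul_smul, Matrix.smul_mul]
    rw [h2, Real.mul_self_sqrt (by norm_num : (0:ℝ) ≤ 2), h3]
  obtain ⟨M, hMu, hMcong⟩ := ternary_unimodular_sig21 K hKsym hKunit Q2 hQ2u hKcong
  set F2 : Matrix (Fin 3) (Fin 3) ℤ := M⁻¹ with hF2
  have hMF : M * F2 = 1 := mul_nonsing_inv M hMu
  have hFM : F2 * M = 1 := nonsing_inv_mul M hMu
  have hFcong : F2ᵀ * Matrix.diagonal ![(1:ℤ),1,-1] * F2 = K := by
    rw [← hMcong]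
    have h1 : F2ᵀ * (Mᵀ * K * M) * F2 = (M * F2)ᵀ * K * (M * F2) := by
      rw [transpose_mul]
      noncomm_ring
    rw [h1, hMF, transpose_one, Matrix.one_mul, Matrix.mul_one]
  have hdiag2 : Matrix.diagonal ![(2:ℤ),2,-2] = (2:ℤ) • Matrix.diagonal ![(1:ℤ),1,-1] := by
    ext i j
    fin_cases i <;> fin_cases j <;> simp [Matrix.diagonal]
  refine ⟨heven, ?_, ?_, ?_, ?_, ?_⟩
  · -- halfL is not even
    intro hevenK
    have hdiag : ∀ i : Fin 3, 2 ∣ K i i := by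
      intro i
      have h5 : 2 ∣ (Pi.single i 1 : Fin 3 → ℤ) ⬝ᵥ K *ᵥ Pi.single i 1 := hevenK (Pi.single i 1)
      have hval : (Pi.single i 1 : Fin 3 → ℤ) ⬝ᵥ K *ᵥ (Pi.single i 1) = K i i := by
        rw [single_dotProduct, one_mul]
        show (fun k => K i k) ⬝ᵥ Pi.single i 1 = K i i
        rw [dotProduct_single, mul_one]
      rwa [hval] at h5
    have hdet2 : 2 ∣ K.det := by
      rw [det_fin_three]
      have h01 : K 1 0 = K 0 1 := hKsym.apply 0 1
      have h02 : K 2 0 = K 0 2 := hKsym.apply 0 2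
      have h12 : K 2 1 = K 1 2 := hKsym.apply 1 2
      obtain ⟨a, hA⟩ := hdiag 0
      obtain ⟨b, hB⟩ := hdiag 1
      obtain ⟨c3, hC3⟩ := hdiag 2
      rw [h01, h02, h12, hA, hB, hC3]
      refine ⟨4*a*b*c3 - a*(K 1 2)*(K 1 2) - (K 0 1)*(K 0 1)*c3 + (K 0 1)*(K 1 2)*(K 0 2)
        - (K 0 2)*(K 0 2)*b, by ring⟩
    rcases Int.isUnit_iff.mp hKunit with h | h <;> omega
  · -- halfL is unimodular
    exact hKunit
  · -- halfL has signature (2,1)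
    refine ⟨rfl, Q2, hQ2u, ?_⟩
    show Q2ᵀ * (K.map (Int.cast : ℤ → ℝ)) * Q2 =
      Matrix.diagonal (fun i : Fin 3 => if (i:ℕ) < 2 then (1:ℝ) else -1)
    rw [hdiagfun]
    exact hKcong
  · -- S ≅ diag(2,2,-2)
    refine ⟨F2, ⟨⟨M, hFM, hMF⟩, ?_⟩⟩
    show F2ᵀ * Matrix.diagonal ![(2:ℤ),2,-2] * F2 = G
    rw [hdiag2, Matrix.mul_smul, Matrix.smul_mul, hFcong, ← hG2K]
  · -- S(1/2) ≅ diag(1,1,-1)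
    refine ⟨F2, ⟨⟨M, hFM, hMF⟩, ?_⟩⟩
    show F2ᵀ * Matrix.diagonal ![(1:ℤ),1,-1] * F2 = K
    exact hFcong
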